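/- Surrogate approximation bound (pointwise version): let h: ℝ → [0,1] be measurable and for b ∈ ℝ, ε > 0 define r(b) = ∫_{a_L}^{b}(1−α)h(a)da + ∫_{b}^{a_U}α(1−h(a))da and r_ε(b) = ∫_{a_L}^{a_U} [(1−α)h(a)Ψ_ε(b,a) + α(1−h(a))Ψ_ε(a,b)] da with Ψ_ε(x,y)=min(ε⁻¹·max(x−y,0),1). Then |r(b) − r_ε(b)| ≤ ε for all b ∈ [a_L + ε, a_U − ε]. -/
import Mathlib


open Set intervalIntegral

noncomputable def Psi (ε x y : ℝ) : ℝ := min (ε⁻¹ * max (x - y) 0) 1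

lemma Psi_nonneg {ε : ℝ} (hε : 0 < ε) (x y : ℝ) : 0 ≤ Psi ε x y := by
  unfold Psi
  exact le_min (mul_nonneg (by positivity) (le_max_right _ _)) zero_le_one

lemma Psi_le_one (ε x y : ℝ) : Psi ε x y ≤ 1 := min_le_right _ _

lemma Psi_eq_zero {ε x y : ℝ} (h : x ≤ y) : Psi ε x y = 0 := by
  unfold Psi
  rw [max_eq_right (by linarith), mul_zero]
  simp

lemma Psi_eq_one {ε x y : ℝ} (hε : 0 < ε) (h : y + ε ≤ x) : Psi ε x y = 1 := by
  unfold Psi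
  rw [max_eq_left (by linarith), min_eq_right]
  have h1 : ε⁻¹ * ε ≤ ε⁻¹ * (x - y) :=
    mul_le_mul_of_nonneg_left (by linarith) (inv_nonneg.mpr hε.le)
  rw [inv_mul_cancel₀ hε.ne'] at h1
  exact h1

lemma continuous_Psi_fst (ε y : ℝ) : Continuous fun x => Psi ε x y := by
  unfold Psi
  exact (continuous_const.mul ((continuous_id.sub continuous_const).max
    continuous_const)).min continuous_const

lemma continuous_Psi_snd (ε x : ℝ) : Continuous fun y => Psi ε x y := by
  unfold Psi
  exact (continuous_const.mul ((continuous_const.sub continuous_id).max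
    continuous_const)).min continuous_const

lemma intInt_of_bdd {c d : ℝ} (hcd : c ≤ d) {f : ℝ → ℝ} (hf : Measurable f)
    (hb : ∀ a ∈ Icc c d, |f a| ≤ 1) :
    IntervalIntegrable f MeasureTheory.volume c d := by
  apply IntervalIntegrable.mono_fun (_root_.intervalIntegrable_const (c := (1 : ℝ)))
    hf.aestronglyMeasurable.restrict
  filter_upwards [MeasureTheory.ae_restrict_mem measurableSet_uIoc] with a ha
  have ha' : a ∈ Icc c d := by
    rw [uIoc_of_le hcd] at ha
    exact Ioc_subset_Icc_self ha
  simpa [Real.norm_eq_abs] using hb a ha'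

theorem surrogate_approx_bound (aL aU α ε : ℝ) (h : ℝ → ℝ)
    (hlt : aL < aU) (hε : 0 < ε) (hgap : 2 * ε < aU - aL)
    (hα : α ∈ Icc (0 : ℝ) 1)
    (hmeas : Measurable h)
    (hrange : ∀ a ∈ Icc aL aU, h a ∈ Icc (0 : ℝ) 1)
    (r rε : ℝ → ℝ)
    (hr : ∀ b, r b = (∫ a in aL..b, (1 - α) * h a) + ∫ a in b..aU, α * (1 - h a))
    (hrε : ∀ b, rε b = ∫ a in aL..aU,
      ((1 - α) * h a * Psi ε b a + α * (1 - h a) * Psi ε a b)) :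
    ∀ b ∈ Icc (aL + ε) (aU - ε), |r b - rε b| ≤ ε := by
  intro b hb
  obtain ⟨hb1, hb2⟩ := hb
  obtain ⟨hα0, hα1⟩ := hα
  have hεb1 : aL ≤ b - ε := by linarith
  have hεb2 : b + ε ≤ aU := by linarith
  have haLb : aL ≤ b := by linarith
  have hbaU : b ≤ aU := by linarith
  set f1 : ℝ → ℝ := fun a => (1 - α) * h a with hf1
  set f2 : ℝ → ℝ := fun a => α * (1 - h a) with hf2
  set g1 : ℝ → ℝ := fun a => (1 - α) * h a * Psi ε b a with hg1
  set g2 : ℝ → ℝ := fun a => α * (1 - h a) * Psi ε a b with hg2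
  -- basic bounds on the integrands on [aL, aU]
  have hbd1 : ∀ a ∈ Icc aL aU, 0 ≤ f1 a ∧ f1 a ≤ 1 - α := by
    intro a ha
    obtain ⟨h0, h1⟩ := hrange a ha
    constructor
    · exact mul_nonneg (by linarith) h0
    · calc (1 - α) * h a ≤ (1 - α) * 1 := by
            exact mul_le_mul_of_nonneg_left h1 (by linarith)
        _ = 1 - α := by ring
  have hbd2 : ∀ a ∈ Icc aL aU, 0 ≤ f2 a ∧ f2 a ≤ α := by
    intro a ha
    obtain ⟨h0, h1⟩ := hrange a ha
    constructor
    · exact mul_nonneg hα0 (by linarith)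
    · calc α * (1 - h a) ≤ α * 1 := mul_le_mul_of_nonneg_left (by linarith) hα0
        _ = α := by ring
  have hbdg1 : ∀ a ∈ Icc aL aU, 0 ≤ g1 a ∧ g1 a ≤ f1 a := by
    intro a ha
    obtain ⟨h0, _⟩ := hbd1 a ha
    refine ⟨mul_nonneg h0 (Psi_nonneg hε _ _), ?_⟩
    calc f1 a * Psi ε b a ≤ f1 a * 1 :=
          mul_le_mul_of_nonneg_left (Psi_le_one _ _ _) h0
      _ = f1 a := by ring
  have hbdg2 : ∀ a ∈ Icc aL aU, 0 ≤ g2 a ∧ g2 a ≤ f2 a := by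
    intro a ha
    obtain ⟨h0, _⟩ := hbd2 a ha
    refine ⟨mul_nonneg h0 (Psi_nonneg hε _ _), ?_⟩
    calc f2 a * Psi ε a b ≤ f2 a * 1 :=
          mul_le_mul_of_nonneg_left (Psi_le_one _ _ _) h0
      _ = f2 a := by ring
  -- measurability
  have hm1 : Measurable f1 := measurable_const.mul hmeas
  have hm2 : Measurable f2 := measurable_const.mul (measurable_const.sub hmeas)
  have hmg1 : Measurable g1 := hm1.mul (continuous_Psi_snd ε b).measurable
  have hmg2 : Measurable g2 := hm2.mul ((continuous_Psi_fst ε b).measurable)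
  -- integrability on [aL, aU]
  have habs : ∀ {x c : ℝ}, 0 ≤ x → x ≤ c → c ≤ 1 → |x| ≤ 1 := by
    intro x c h0 h1 h2
    rw [abs_of_nonneg h0]; linarith
  have I1 : IntervalIntegrable f1 MeasureTheory.volume aL aU :=
    intInt_of_bdd hlt.le hm1 (fun a ha =>
      habs (hbd1 a ha).1 (hbd1 a ha).2 (by linarith))
  have I2 : IntervalIntegrable f2 MeasureTheory.volume aL aU :=
    intInt_of_bdd hlt.le hm2 (fun a ha =>
      habs (hbd2 a ha).1 (hbd2 a ha).2 hα1)
  have Ig1 : IntervalIntegrable g1 MeasureTheory.volume aL aU :=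
    intInt_of_bdd hlt.le hmg1 (fun a ha =>
      habs (hbdg1 a ha).1 ((hbdg1 a ha).2.trans (hbd1 a ha).2) (by linarith))
  have Ig2 : IntervalIntegrable g2 MeasureTheory.volume aL aU :=
    intInt_of_bdd hlt.le hmg2 (fun a ha =>
      habs (hbdg2 a ha).1 ((hbdg2 a ha).2.trans (hbd2 a ha).2) hα1)
  -- restriction to subintervals
  have hsub1 : uIcc aL b ⊆ uIcc aL aU := by
    rw [uIcc_of_le haLb, uIcc_of_le hlt.le]
    exact Icc_subset_Icc le_rfl hbaU
  have hsub2 : uIcc b aU ⊆ uIcc aL aU := by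
    rw [uIcc_of_le hbaU, uIcc_of_le hlt.le]
    exact Icc_subset_Icc haLb le_rfl
  -- split rε at b
  have hsum : IntervalIntegrable (fun a => g1 a + g2 a) MeasureTheory.volume aL aU :=
    Ig1.add Ig2
  have hsplit : (∫ a in aL..aU, (g1 a + g2 a))
      = (∫ a in aL..b, (g1 a + g2 a)) + ∫ a in b..aU, (g1 a + g2 a) :=
    (integral_add_adjacent_intervals (hsum.mono_set hsub1) (hsum.mono_set hsub2)).symm
  have hleft : (∫ a in aL..b, (g1 a + g2 a)) = ∫ a in aL..b, g1 a := by
    apply integral_congr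
    intro a ha
    rw [uIcc_of_le haLb] at ha
    have : Psi ε a b = 0 := Psi_eq_zero ha.2
    simp [hg1, hg2, this]
  have hright : (∫ a in b..aU, (g1 a + g2 a)) = ∫ a in b..aU, g2 a := by
    apply integral_congr
    intro a ha
    rw [uIcc_of_le hbaU] at ha
    have : Psi ε b a = 0 := Psi_eq_zero ha.1
    simp [hg1, hg2, this]
  -- difference decomposition
  have hdiff : r b - rε b
      = (∫ a in aL..b, (f1 a - g1 a)) + ∫ a in b..aU, (f2 a - g2 a) := by
    rw [hr b, hrε b]
    have e1 : (∫ a in aL..aU, ((1 - α) * h a * Psi ε b a + α * (1 - h a) * Psi ε a b))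
        = (∫ a in aL..b, g1 a) + ∫ a in b..aU, g2 a := by
      rw [← hleft, ← hright, ← hsplit]
    rw [e1,
      integral_sub (I1.mono_set hsub1) (Ig1.mono_set hsub1),
      integral_sub (I2.mono_set hsub2) (Ig2.mono_set hsub2)]
    ring
  -- bound the first term
  have hsubL : uIcc aL (b - ε) ⊆ uIcc aL aU := by
    rw [uIcc_of_le hεb1, uIcc_of_le hlt.le]
    exact Icc_subset_Icc le_rfl (by linarith)
  have hsubM : uIcc (b - ε) b ⊆ uIcc aL aU := by
    rw [uIcc_of_le (by linarith : b - ε ≤ b), uIcc_of_le hlt.le]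
    exact Icc_subset_Icc hεb1 hbaU
  have hsubR : uIcc (b + ε) aU ⊆ uIcc aL aU := by
    rw [uIcc_of_le hεb2, uIcc_of_le hlt.le]
    exact Icc_subset_Icc (by linarith) le_rfl
  have hsubM' : uIcc b (b + ε) ⊆ uIcc aL aU := by
    rw [uIcc_of_le (by linarith : b ≤ b + ε), uIcc_of_le hlt.le]
    exact Icc_subset_Icc haLb hεb2
  have Id1 : IntervalIntegrable (fun a => f1 a - g1 a) MeasureTheory.volume aL aU :=
    I1.sub Ig1
  have Id2 : IntervalIntegrable (fun a => f2 a - g2 a) MeasureTheory.volume aL aU :=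
    I2.sub Ig2
  have hterm1 : (∫ a in aL..b, (f1 a - g1 a)) = ∫ a in b - ε..b, (f1 a - g1 a) := by
    rw [← integral_add_adjacent_intervals (Id1.mono_set hsubL) (Id1.mono_set hsubM)]
    have hz : (∫ a in aL..(b - ε), (f1 a - g1 a)) = 0 := by
      rw [integral_congr (g := fun _ => (0 : ℝ))]
      · simp
      · intro a ha
        rw [uIcc_of_le hεb1] at ha
        have : Psi ε b a = 1 := Psi_eq_one hε (by linarith [ha.2])
        simp [hg1, hf1, this]
    rw [hz, zero_add]
  have hterm2 : (∫ a in b..aU, (f2 a - g2 a)) = ∫ a in b..(b + ε), (f2 a - g2 a) := by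
    rw [← integral_add_adjacent_intervals (Id2.mono_set hsubM') (Id2.mono_set hsubR)]
    have hz : (∫ a in (b + ε)..aU, (f2 a - g2 a)) = 0 := by
      rw [integral_congr (g := fun _ => (0 : ℝ))]
      · simp
      · intro a ha
        rw [uIcc_of_le hεb2] at ha
        have : Psi ε a b = 1 := Psi_eq_one hε (by linarith [ha.1])
        simp [hg2, hf2, this]
    rw [hz, add_zero]
  -- bounds on the two remaining integrals
  have hmem1 : ∀ a ∈ Icc (b - ε) b, a ∈ Icc aL aU := fun a ha =>
    ⟨by linarith [ha.1], by linarith [ha.2]⟩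
  have hmem2 : ∀ a ∈ Icc b (b + ε), a ∈ Icc aL aU := fun a ha =>
    ⟨by linarith [ha.1], by linarith [ha.2]⟩
  have h1lo : 0 ≤ ∫ a in b - ε..b, (f1 a - g1 a) := by
    apply integral_nonneg (by linarith : b - ε ≤ b)
    intro a ha
    have ha' := hmem1 a ha
    linarith [(hbdg1 a ha').2]
  have h1hi : (∫ a in b - ε..b, (f1 a - g1 a)) ≤ (1 - α) * ε := by
    have : (∫ a in b - ε..b, (f1 a - g1 a)) ≤ ∫ _ in b - ε..b, (1 - α) := by
      apply integral_mono_on (by linarith : b - ε ≤ b)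
        (Id1.mono_set hsubM) intervalIntegrable_const
      intro a ha
      have ha' := hmem1 a ha
      linarith [(hbdg1 a ha').1, (hbd1 a ha').2]
    rw [integral_const] at this
    calc (∫ a in b - ε..b, (f1 a - g1 a)) ≤ (b - (b - ε)) • (1 - α) := this
      _ = (1 - α) * ε := by simp [smul_eq_mul]; ring
  have h2lo : 0 ≤ ∫ a in b..(b + ε), (f2 a - g2 a) := by
    apply integral_nonneg (by linarith : b ≤ b + ε)
    intro a ha
    have ha' := hmem2 a ha
    linarith [(hbdg2 a ha').2]
  have h2hi : (∫ a in b..(b + ε), (f2 a - g2 a)) ≤ α * ε := by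
    have : (∫ a in b..(b + ε), (f2 a - g2 a)) ≤ ∫ _ in b..(b + ε), α := by
      apply integral_mono_on (by linarith : b ≤ b + ε)
        (Id2.mono_set hsubM') intervalIntegrable_const
      intro a ha
      have ha' := hmem2 a ha
      linarith [(hbdg2 a ha').1, (hbd2 a ha').2]
    rw [integral_const] at this
    calc (∫ a in b..(b + ε), (f2 a - g2 a)) ≤ (b + ε - b) • α := this
      _ = α * ε := by simp [smul_eq_mul]; ring
  rw [hdiff, hterm1, hterm2, abs_le]
  constructor <;> nlinarith
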